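/- Let 𝒪 be an order in a number field of degree k with ℤ-basis ω₁=1,…,ω_k, let p ∈ 𝒪[x] be monic with p(0) ≠ 0, and let 𝒟 ⊂ 𝒪 be a complete residue system modulo p(0) containing 0. Then there exists a bounded fundamental domain ℱ for the action of ℤ^k on ℝ^k such that 𝒟 = (p(0)·(ℱ·ω)) ∩ 𝒪. -/

import Mathlib

open Polynomial

/-- Every digit set of a GNS over an order comes from a bounded fundamental
domain. Given a monic `p ∈ 𝒪[x]` with `p(0) ≠ 0` and a complete residue system `𝒟`
modulo `p(0)` containing `0`, there is a bounded fundamental domain `ℱ` for `ℤ^k` acting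
on `ℝ^k` such that `𝒟 = (p(0)·(ℱ·ω)) ∩ 𝒪`, i.e. `d ∈ 𝒟` iff the coordinate vector of
`d/p(0)` with respect to the basis `ω` lies in `ℱ`. -/
theorem statement1 {K : Type*} [Field K] [NumberField K] {k : ℕ} (hk : 0 < k)
    (𝒪 : Subalgebra ℤ K) (w : Module.Basis (Fin k) ℚ K) (hw1 : w ⟨0, hk⟩ = 1)
    (h𝒪 : ∀ x : K, x ∈ 𝒪 ↔ ∀ j : Fin k, ∃ z : ℤ, (w.repr x) j = (z : ℚ))
    (p : Polynomial 𝒪) (hp : p.Monic) (hp0 : p.coeff 0 ≠ 0)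
    (D : Set 𝒪) (hD0 : 0 ∈ D)
    (hD : ∀ β : 𝒪, ∃! d : 𝒪, d ∈ D ∧ p.coeff 0 ∣ β - d) :
    ∃ ℱ : Set (Fin k → ℝ), Bornology.IsBounded ℱ ∧ (0 : Fin k → ℝ) ∈ ℱ ∧
      (∀ x : Fin k → ℝ, ∃! z : Fin k → ℤ, (x - fun j => (z j : ℝ)) ∈ ℱ) ∧
      (∀ d : 𝒪, d ∈ D ↔
        (fun j => ((w.repr ((d : K) / (p.coeff 0 : K)) j : ℚ) : ℝ)) ∈ ℱ) := by
  classical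
  set p0 : 𝒪 := p.coeff 0 with hp0def
  have hp0K : (p0 : K) ≠ 0 := by
    simpa [ZeroMemClass.coe_eq_zero] using hp0
  have hcoord : ∀ d : 𝒪, ∀ j, ∃ z : ℤ, w.repr (d : K) j = (z : ℚ) :=
    fun d j => (h𝒪 d).mp d.2 j
  have hrepr_sum : ∀ z : Fin k → ℚ, ∀ j, w.repr (∑ i, z i • w i) j = z j := by
    intro z j
    rw [map_sum]
    simp [Module.Basis.repr_self, Finsupp.single_apply]
  have hsum_mem : ∀ z : Fin k → ℤ, (∑ i, ((z i : ℚ)) • w i) ∈ 𝒪 := by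
    intro z
    rw [h𝒪]
    intro j
    exact ⟨z j, hrepr_sum _ j⟩
  set s : (Fin k → ℤ) → 𝒪 := fun z => ⟨∑ i, ((z i : ℚ)) • w i, hsum_mem z⟩ with hsdef
  have hrepr_s : ∀ z : Fin k → ℤ, ∀ j, w.repr (s z : K) j = (z j : ℚ) := by
    intro z j; exact hrepr_sum _ j
  -- every element of 𝒪 is s of its coordinate vector
  have hs_surj : ∀ c : 𝒪, ∃ z : Fin k → ℤ, s z = c := by
    intro c
    refine ⟨fun j => Classical.choose (hcoord c j), Subtype.ext ?_⟩
    have : ∀ j, w.repr (s (fun j => Classical.choose (hcoord c j)) : K) j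
        = w.repr (c : K) j := by
      intro j
      rw [hrepr_s]
      exact (Classical.choose_spec (hcoord c j)).symm
    apply w.repr.injective
    exact Finsupp.ext this
  set V : 𝒪 → (Fin k → ℝ) :=
    fun d => fun j => ((w.repr ((d : K) / (p0 : K)) j : ℚ) : ℝ) with hVdef
  have hVinj : Function.Injective V := by
    intro d d' h
    have h2 : (d : K) / (p0 : K) = (d' : K) / (p0 : K) := by
      apply w.repr.injective
      apply Finsupp.ext
      intro j
      have := congrFun h j
      simp only [hVdef] at this
      exact_mod_cast this
    field_simp at h2
    exact_mod_cast h2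
  -- translation identity
  have hVtrans : ∀ (d : 𝒪) (z : Fin k → ℤ),
      V (d - p0 * s z) = V d - fun j => ((z j : ℝ)) := by
    intro d z
    funext j
    have hK : ((d - p0 * s z : 𝒪) : K) / (p0 : K)
        = (d : K) / (p0 : K) - (s z : K) := by
      push_cast
      field_simp
    simp only [hVdef, Pi.sub_apply, hK, map_sub, Finsupp.sub_apply, hrepr_s]
    push_cast
    ring
  -- congruence mod p0 iff integer translate
  have hVcong : ∀ d d' : 𝒪, p0 ∣ d - d' →
      ∃ z : Fin k → ℤ, V d' = V d - fun j => ((z j : ℝ)) := by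
    intro d d' ⟨c, hc⟩
    obtain ⟨z, hz⟩ := hs_surj c
    refine ⟨z, ?_⟩
    rw [← hVtrans d z]
    rw [hz, ← hc]
    ring_nf
  -- p0 divides a nonzero integer
  have hfg : (Subalgebra.toSubmodule 𝒪).FG := by
    refine ⟨Finset.univ.image w, ?_⟩
    apply le_antisymm
    · rw [Submodule.span_le]
      intro x hx
      simp only [Finset.coe_image, Set.mem_image] at hx
      obtain ⟨j, -, rfl⟩ := hx
      show w j ∈ 𝒪
      rw [h𝒪]
      intro i
      by_cases h : j = i
      · exact ⟨1, by simp [h, Module.Basis.repr_self]⟩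
      · exact ⟨0, by simp [Module.Basis.repr_self, Finsupp.single_apply, h]⟩
    · intro x hx
      have hx' : x ∈ 𝒪 := hx
      obtain ⟨z, hz⟩ := hs_surj ⟨x, hx'⟩
      have heq : x = ∑ i, z i • w i := by
        have h1 := congrArg (Subtype.val) hz
        simp only [hsdef] at h1
        rw [← h1]
        apply Finset.sum_congr rfl
        intro i _
        rw [zsmul_eq_mul, Rat.smul_def]
        norm_cast
      rw [heq]
      apply Submodule.sum_mem
      intro i _
      apply Submodule.smul_mem
      apply Submodule.subset_span
      simp
  have hint : IsIntegral ℤ (p0 : K) :=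
    IsIntegral.of_mem_of_fg _ hfg _ p0.2
  obtain ⟨a, ha0, t, hta⟩ : ∃ a : ℤ, a ≠ 0 ∧ ∃ t : 𝒪, algebraMap ℤ 𝒪 a = p0 * t := by
    obtain ⟨q, hqm, hq0⟩ := hint
    obtain ⟨r, hr⟩ : X ^ q.natTrailingDegree ∣ q :=
      Polynomial.X_pow_dvd_iff.mpr
        (fun d hd => Polynomial.coeff_eq_zero_of_lt_natTrailingDegree hd)
    have hq0' : aeval (p0 : K) q = 0 := hq0
    have hrK : aeval (p0 : K) r = 0 := by
      rw [hr, map_mul, map_pow, aeval_X] at hq0'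
      rcases mul_eq_zero.mp hq0' with h | h
      · exact absurd h (pow_ne_zero _ hp0K)
      · exact h
    have hr𝒪 : aeval p0 r = 0 := by
      have h2 : (𝒪.val (aeval p0 r) : K) = 0 := by
        rw [← Polynomial.aeval_algHom_apply]
        exact hrK
      exact Subtype.ext h2
    refine ⟨r.coeff 0, ?_, -(aeval p0 r.divX), ?_⟩
    · intro h
      have hqc : q.coeff q.natTrailingDegree = r.coeff 0 := by
        have h5 := Polynomial.coeff_X_pow_mul r q.natTrailingDegree 0
        rw [zero_add] at h5
        rw [← hr] at h5
        exact h5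
      have htc : q.trailingCoeff = 0 := by
        rw [Polynomial.trailingCoeff, hqc, h]
      exact hqm.ne_zero (Polynomial.trailingCoeff_eq_zero.mp htc)
    · have h3 := Polynomial.X_mul_divX_add r
      have h4 := congrArg (aeval (p0 : 𝒪)) h3
      rw [map_add, map_mul, aeval_X, aeval_C, hr𝒪] at h4
      linear_combination h4
  -- D is finite
  have hDfin : D.Finite := by
    haveI : NeZero a.natAbs := ⟨Int.natAbs_ne_zero.mpr ha0⟩
    set f : D → (Fin k → ZMod a.natAbs) :=
      fun d j => ((Classical.choose (hcoord d.1 j) : ℤ) : ZMod a.natAbs) with hf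
    have hfinj : Function.Injective f := by
      intro d d' h
      set zd : Fin k → ℤ := fun j => Classical.choose (hcoord d.1 j) with hzd
      set zd' : Fin k → ℤ := fun j => Classical.choose (hcoord d'.1 j) with hzd'
      have hdvd : ∀ j, a ∣ (zd j - zd' j) := by
        intro j
        have h2 : ((zd j : ℤ) : ZMod a.natAbs) = ((zd' j : ℤ) : ZMod a.natAbs) :=
          congrFun h j
        rw [ZMod.intCast_eq_intCast_iff] at h2
        have h3 := Int.ModEq.dvd h2
        rw [Int.natAbs_dvd] at h3
        exact dvd_sub_comm.mp h3
      choose y hy using hdvd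
      have key : (d.1 : 𝒪) - d'.1 = algebraMap ℤ 𝒪 a * s y := by
        apply Subtype.ext
        apply w.repr.injective
        apply Finsupp.ext
        intro j
        have hrd : w.repr (d.1 : K) j = (zd j : ℚ) := Classical.choose_spec (hcoord d.1 j)
        have hrd' : w.repr (d'.1 : K) j = (zd' j : ℚ) := Classical.choose_spec (hcoord d'.1 j)
        have hL : ((d.1 : 𝒪) - d'.1 : 𝒪) = ((d.1 : K) - (d'.1 : K) : K) := by push_cast; ring
        have hR : ((algebraMap ℤ 𝒪 a * s y : 𝒪) : K) = (a : ℚ) • (s y : K) := by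
          push_cast
          rw [Rat.smul_def]
          norm_cast
        rw [hL, hR, map_sub, map_smul, Finsupp.sub_apply, Finsupp.smul_apply, hrd, hrd',
          hrepr_s, smul_eq_mul]
        rw [← Rat.cast_intCast (n := zd j), ← Rat.cast_intCast (n := zd' j)]
        norm_cast
        rw [hy j]
      have hp0dvd : p0 ∣ d.1 - d'.1 := ⟨t * s y, by rw [key, hta]; ring⟩
      obtain ⟨d0, -, hUniq⟩ := hD d.1
      have e1 : (d.1 : 𝒪) = d0 := hUniq d.1 ⟨d.2, by simp⟩
      have e2 : (d'.1 : 𝒪) = d0 := hUniq d'.1 ⟨d'.2, hp0dvd⟩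
      exact Subtype.ext (e1.trans e2.symm)
    haveI : Finite ↥D := Finite.of_injective f hfinj
    exact D.toFinite
  set C : Set (Fin k → ℝ) := {x | ∀ j, 0 ≤ x j ∧ x j < 1} with hC
  refine ⟨(C \ Set.range V) ∪ (V '' D), ?_, ?_, ?_, ?_⟩
  · -- bounded
    apply Bornology.IsBounded.union
    · refine Bornology.IsBounded.subset ?_ Set.diff_subset
      refine Metric.isBounded_closedBall (x := (0 : Fin k → ℝ)) (r := 1) |>.subset ?_
      intro x hx
      rw [Metric.mem_closedBall, dist_zero_right]
      rw [pi_norm_le_iff_of_nonneg zero_le_one]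
      intro j
      rw [Real.norm_eq_abs, abs_le]
      exact ⟨by linarith [(hx j).1], le_of_lt (hx j).2⟩
    · exact (hDfin.image V).isBounded
  · -- 0 ∈ F
    right
    refine ⟨0, hD0, ?_⟩
    funext j
    simp [hVdef]
  · -- fundamental domain
    intro x
    set z0 : Fin k → ℤ := fun j => ⌊x j⌋ with hz0
    have hcmem : (x - fun j => ((z0 j : ℝ))) ∈ C := by
      intro j
      simp only [Pi.sub_apply]
      constructor
      · have := Int.floor_le (x j); simp only [hz0]; linarith
      · have := Int.lt_floor_add_one (x j); simp only [hz0]; linarith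
    by_cases hc : (x - fun j => ((z0 j : ℝ))) ∈ Set.range V
    · obtain ⟨d, hd⟩ := hc
      obtain ⟨d0, ⟨hd0D, hd0dvd⟩, hUniq⟩ := hD d
      obtain ⟨z1, hz1⟩ := hVcong d d0 hd0dvd
      refine ⟨z0 + z1, ?_, ?_⟩
      · right
        refine ⟨d0, hd0D, ?_⟩
        rw [hz1, hd]
        funext j
        simp only [Pi.sub_apply, Pi.add_apply]
        push_cast
        ring
      · intro z hz
        have hxz : (x - fun j => ((z j : ℝ))) = V (d - p0 * s (z - z0)) := by
          rw [hVtrans, hd]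
          funext j
          simp only [Pi.sub_apply]
          push_cast
          ring
        have hnotC : (x - fun j => ((z j : ℝ))) ∉ C \ Set.range V :=
          fun h => h.2 ⟨_, hxz.symm⟩
        obtain ⟨d', hd'D, hd'⟩ := hz.resolve_left hnotC
        have hdd : d' = d - p0 * s (z - z0) := hVinj (hd'.trans hxz)
        have hdvd' : p0 ∣ d - d' := ⟨s (z - z0), by rw [hdd]; ring⟩
        have hd'0 : d' = d0 := hUniq d' ⟨hd'D, hdvd'⟩
        have hveq : (x - fun j => ((z j : ℝ))) = (x - fun j => (((z0 + z1) j : ℝ))) := by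
          rw [← hd', hd'0, hz1, hd]
          funext j
          simp only [Pi.sub_apply, Pi.add_apply]
          push_cast
          ring
        funext j
        have h6 := congrFun hveq j
        simp only [Pi.sub_apply, Pi.add_apply] at h6
        have : (z j : ℝ) = ((z0 + z1) j : ℝ) := by
          simp only [Pi.add_apply]
          push_cast
          push_cast at h6
          linarith
        exact_mod_cast this
    · refine ⟨z0, Or.inl ⟨hcmem, hc⟩, ?_⟩
      intro z hz
      have hnot : (x - fun j => ((z j : ℝ))) ∉ V '' D := by
        rintro ⟨d', -, hd'⟩
        apply hc
        refine ⟨d' - p0 * s (z0 - z), ?_⟩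
        rw [hVtrans, hd']
        funext j
        simp only [Pi.sub_apply]
        push_cast
        ring
      have hmC : (x - fun j => ((z j : ℝ))) ∈ C \ Set.range V := by
        rcases hz with h | h
        · exact h
        · exact absurd h hnot
      funext j
      have h7 := hmC.1 j
      simp only [Pi.sub_apply] at h7
      have : ⌊x j⌋ = z j := Int.floor_eq_iff.mpr ⟨by linarith [h7.1], by push_cast; linarith [h7.2]⟩
      simp only [hz0]
      exact this.symm
  · -- characterization of D
    intro d
    constructor
    · intro hd
      right
      exact ⟨d, hd, rfl⟩
    · intro hmem
      rcases hmem with h | ⟨d', hd', he⟩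
      · exact absurd ⟨d, rfl⟩ h.2
      · have : d' = d := hVinj he
        rwa [← this]
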